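/- Let P and Q be Markov transition kernels on a measurable space, and let P', Q' be the kernels obtained from P, Q by applying a Metropolis filter with respect to an acceptance function with rejection probabilities at most r at each point. Then d_TV(P'_x, Q'_y) ≤ d_TV(P_x, Q_y) + 2r for all points x, y. -/

import Mathlib

open MeasureTheory Real Set

/-- Total variation distance between two (finite) measures. -/
noncomputable def tvDist {α : Type*} [MeasurableSpace α] (μ ν : Measure α) : ℝ :=
  ⨆ s : Set α, |(μ s).toReal - (ν s).toReal|

/-- The Metropolis-filtered measure differs from the original by at most `r` on any set. -/
lemma metro_close {α : Type*} [MeasurableSpace α] (μ : Measure α) [IsProbabilityMeasure μ]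
    (r : ℝ) (hr : 0 ≤ r) (ρ : α → ℝ) (hρ : ∀ z, 0 ≤ ρ z ∧ ρ z ≤ r) (x : α) (s : Set α) :
    |(((μ.withDensity (fun z => ENNReal.ofReal (1 - ρ z)) +
      (ENNReal.ofReal (∫ z, ρ z ∂μ)) • Measure.dirac x)) s).toReal - (μ s).toReal| ≤ r := by
  set ν := μ.withDensity (fun z => ENNReal.ofReal (1 - ρ z)) +
      (ENNReal.ofReal (∫ z, ρ z ∂μ)) • Measure.dirac x with hν
  have hint : ENNReal.ofReal (∫ z, ρ z ∂μ) ≤ ENNReal.ofReal r := by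
    apply ENNReal.ofReal_le_ofReal
    by_cases h : Integrable ρ μ
    · calc ∫ z, ρ z ∂μ ≤ ∫ _z, r ∂μ :=
            integral_mono h (integrable_const r) (fun z => (hρ z).2)
        _ = r := by simp
    · rw [integral_undef h]; exact hr
  have hwd_le : μ.withDensity (fun z => ENNReal.ofReal (1 - ρ z)) ≤ μ := by
    rw [Measure.le_iff]
    intro t ht
    rw [withDensity_apply _ ht]
    calc ∫⁻ z in t, ENNReal.ofReal (1 - ρ z) ∂μ ≤ ∫⁻ _z in t, 1 ∂μ := by
          apply lintegral_mono
          intro z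
          exact ENNReal.ofReal_le_one.mpr (by linarith [(hρ z).1])
      _ = μ t := by simp
  have hupper : ν s ≤ μ s + ENNReal.ofReal r := by
    rw [hν, Measure.add_apply, Measure.smul_apply, smul_eq_mul]
    gcongr
    · calc ENNReal.ofReal (∫ z, ρ z ∂μ) * Measure.dirac x s
          ≤ ENNReal.ofReal r * 1 := mul_le_mul' hint prob_le_one
        _ = ENNReal.ofReal r := mul_one _
  have hlower : ENNReal.ofReal (1 - r) * μ s ≤ ν s := by
    have hle : (ENNReal.ofReal (1 - r)) • μ ≤ μ.withDensity (fun z => ENNReal.ofReal (1 - ρ z)) := by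
      rw [Measure.le_iff]
      intro t ht
      rw [withDensity_apply _ ht, Measure.smul_apply, smul_eq_mul]
      calc ENNReal.ofReal (1 - r) * μ t = ∫⁻ _z in t, ENNReal.ofReal (1 - r) ∂μ := by
            rw [setLIntegral_const]
        _ ≤ ∫⁻ z in t, ENNReal.ofReal (1 - ρ z) ∂μ := by
            apply lintegral_mono
            intro z
            exact ENNReal.ofReal_le_ofReal (by linarith [(hρ z).2])
    calc ENNReal.ofReal (1 - r) * μ s
        = ((ENNReal.ofReal (1 - r)) • μ) s := by rw [Measure.smul_apply, smul_eq_mul]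
      _ ≤ μ.withDensity (fun z => ENNReal.ofReal (1 - ρ z)) s := Measure.le_iff'.mp hle s
      _ ≤ ν s := by rw [hν, Measure.add_apply]; exact le_add_right le_rfl
  have hfin2 : μ s + ENNReal.ofReal r ≠ ⊤ :=
    ENNReal.add_ne_top.mpr ⟨measure_ne_top μ s, ENNReal.ofReal_ne_top⟩
  have hfin : ν s ≠ ⊤ := ne_top_of_le_ne_top hfin2 hupper
  have hp1 : (μ s).toReal ≤ 1 := by
    have := ENNReal.toReal_mono ENNReal.one_ne_top (prob_le_one (μ := μ) (s := s))
    simpa using this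
  have hp0 : 0 ≤ (μ s).toReal := ENNReal.toReal_nonneg
  have h1 : (ν s).toReal ≤ (μ s).toReal + r := by
    have := ENNReal.toReal_mono hfin2 hupper
    rwa [ENNReal.toReal_add (measure_ne_top μ s) ENNReal.ofReal_ne_top,
      ENNReal.toReal_ofReal hr] at this
  have h2 : (1 - r) * (μ s).toReal ≤ (ν s).toReal := by
    have := ENNReal.toReal_mono hfin hlower
    rw [ENNReal.toReal_mul, ENNReal.toReal_ofReal'] at this
    calc (1 - r) * (μ s).toReal ≤ max (1 - r) 0 * (μ s).toReal :=
          mul_le_mul_of_nonneg_right (le_max_left _ _) hp0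
      _ ≤ (ν s).toReal := this
  rw [abs_le]
  constructor
  · nlinarith
  · linarith

/-- Applying a Metropolis filter with pointwise rejection probability at most `r`
increases total variation distance between one-step distributions by at most `2r`. -/
theorem stmt_11 {α : Type*} [MeasurableSpace α]
    (P Q : α → Measure α) (hP : ∀ x, IsProbabilityMeasure (P x))
    (hQ : ∀ x, IsProbabilityMeasure (Q x))
    (r : ℝ) (hr : 0 ≤ r)
    (ρ σ : α → α → ℝ)
    (hρ : ∀ x z, 0 ≤ ρ x z ∧ ρ x z ≤ r) (hσ : ∀ x z, 0 ≤ σ x z ∧ σ x z ≤ r)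
    (P' Q' : α → Measure α)
    (hP' : ∀ x, P' x = (P x).withDensity (fun z => ENNReal.ofReal (1 - ρ x z)) +
      (ENNReal.ofReal (∫ z, ρ x z ∂(P x))) • Measure.dirac x)
    (hQ' : ∀ y, Q' y = (Q y).withDensity (fun z => ENNReal.ofReal (1 - σ y z)) +
      (ENNReal.ofReal (∫ z, σ y z ∂(Q y))) • Measure.dirac y)
    (x y : α) :
    tvDist (P' x) (Q' y) ≤ tvDist (P x) (Q y) + 2 * r := by
  haveI := hP x
  haveI := hQ y
  have hptoReal : ∀ s : Set α, ((P x) s).toReal ≤ 1 ∧ 0 ≤ ((P x) s).toReal := by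
    intro s
    refine ⟨?_, ENNReal.toReal_nonneg⟩
    have := ENNReal.toReal_mono ENNReal.one_ne_top (prob_le_one (μ := P x) (s := s))
    simpa using this
  have hqtoReal : ∀ s : Set α, ((Q y) s).toReal ≤ 1 ∧ 0 ≤ ((Q y) s).toReal := by
    intro s
    refine ⟨?_, ENNReal.toReal_nonneg⟩
    have := ENNReal.toReal_mono ENNReal.one_ne_top (prob_le_one (μ := Q y) (s := s))
    simpa using this
  have hbdd : BddAbove (Set.range fun s : Set α =>
      |((P x) s).toReal - ((Q y) s).toReal|) := by
    refine ⟨1, ?_⟩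
    rintro _ ⟨s, rfl⟩
    rw [abs_le]
    constructor <;> [linarith [(hptoReal s).2, (hqtoReal s).1];
      linarith [(hptoReal s).1, (hqtoReal s).2]]
  unfold tvDist
  apply ciSup_le
  intro s
  have hPclose := metro_close (P x) r hr (ρ x) (hρ x) x s
  have hQclose := metro_close (Q y) r hr (σ y) (hσ y) y s
  rw [hP', hQ']
  have hle : |((P x) s).toReal - ((Q y) s).toReal| ≤
      ⨆ t : Set α, |((P x) t).toReal - ((Q y) t).toReal| := le_ciSup hbdd s
  rw [abs_le] at hPclose hQclose ⊢
  rcases abs_le.mp (le_of_eq (rfl : |((P x) s).toReal - ((Q y) s).toReal| = _)) with _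
  have habs := le_abs_self (((P x) s).toReal - ((Q y) s).toReal)
  have habs' := neg_abs_le (((P x) s).toReal - ((Q y) s).toReal)
  constructor <;> nlinarith [hPclose.1, hPclose.2, hQclose.1, hQclose.2]
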